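/- arXiv:2503.09770 — 3 statements merged into one kernel-verified Lean document; each statement's English description precedes it below -/
import Mathlib

section
/- The assignment sending a to the Möbius transformation z ↦ -1/z and b to z ↦ -1/(z+1) extends to a group isomorphism from the free product ℤ/2 * ℤ/3 onto PSL(2,ℤ). -/
/-- `SL(2,ℤ)`. -/
abbrev SL2Z := Matrix.SpecialLinearGroup (Fin 2) ℤ

/-- `PSL(2,ℤ) = SL(2,ℤ)/{±I}`, the quotient of `SL(2,ℤ)` by its center. -/
abbrev PSL2Z := SL2Z ⧸ Subgroup.center SL2Z

/-- The matrix `S = [[0,-1],[1,0]]`, acting on the upper half-plane as `z ↦ -1/z`. -/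
def Smat : SL2Z := ⟨!![0, -1; 1, 0], by simp [Matrix.det_fin_two_of]⟩

/-- The matrix `T = [[0,-1],[1,1]]`, acting as `z ↦ -1/(z+1)`. -/
def Tmat : SL2Z := ⟨!![0, -1; 1, 1], by simp [Matrix.det_fin_two_of]⟩

namespace PPA

/-- Möbius action of an integer matrix on a real number. -/
noncomputable def act (g : SL2Z) (x : ℝ) : ℝ :=
  ((g 0 0 : ℝ) * x + (g 0 1)) / ((g 1 0 : ℝ) * x + (g 1 1))

lemma row_ne_zero (g : SL2Z) (i : Fin 2) : g i 0 ≠ 0 ∨ g i 1 ≠ 0 := by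
  by_contra h
  push_neg at h
  have hd := g.2
  rw [Matrix.det_fin_two] at hd
  fin_cases i <;> simp_all

lemma denom_ne_zero {x : ℝ} (hx : Irrational x) (g : SL2Z) :
    (g 1 0 : ℝ) * x + (g 1 1) ≠ 0 := by
  rcases row_ne_zero g 1 with h | h
  · intro hc
    have hxx : x = (((-(g 1 1 : ℚ)) / (g 1 0 : ℚ) : ℚ) : ℝ) := by
      push_cast
      field_simp
      linarith
    exact (hx.ne_rat _) hxx
  · intro hc
    rcases eq_or_ne (g 1 0) 0 with h0 | h0
    · rw [h0] at hc; simp at hc; exact h (by exact_mod_cast hc)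
    · have hxx : x = (((-(g 1 1 : ℚ)) / (g 1 0 : ℚ) : ℚ) : ℝ) := by
        push_cast
        rw [eq_div_iff (by exact_mod_cast h0 : ((g 1 0 : ℤ) : ℝ) ≠ 0)]
        linarith
      exact (hx.ne_rat _) hxx

lemma act_irrational {x : ℝ} (hx : Irrational x) (g : SL2Z) : Irrational (act g x) := by
  rintro ⟨q, hq⟩
  have hden := denom_ne_zero hx g
  have hdet := g.2
  rw [Matrix.det_fin_two] at hdet
  have h1 : (g 0 0 : ℝ) * x + g 0 1 = q * ((g 1 0 : ℝ) * x + g 1 1) := by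
    have hq' := hq.symm
    rw [act, div_eq_iff hden] at hq'
    linarith [hq']
  have h2 : ((g 0 0 : ℝ) - q * g 1 0) * x = q * g 1 1 - g 0 1 := by ring_nf; linarith [h1]
  rcases eq_or_ne ((g 0 0 : ℝ) - q * g 1 0) 0 with h3 | h3
  · -- then a = q c and b = q d, det = 0
    have ha : (g 0 0 : ℝ) = q * g 1 0 := by linarith
    have hb : (g 0 1 : ℝ) = q * g 1 1 := by
      rw [h3] at h2
      simp at h2
      linarith
    have : ((g 0 0 * g 1 1 - g 0 1 * g 1 0 : ℤ) : ℝ) = 0 := by push_cast; rw [ha, hb]; ring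
    rw [hdet] at this
    norm_num at this
  · have : x = (((q * g 1 1 - g 0 1) / (g 0 0 - q * g 1 0) : ℚ) : ℝ) := by
      push_cast
      rw [eq_div_iff (by push_cast at h3 ⊢; exact h3)]
      push_cast at h2
      linarith
    exact (hx.ne_rat _) this


lemma act_one (x : ℝ) : act 1 x = x := by
  simp [act, Matrix.SpecialLinearGroup.coe_one]

lemma coe_entries_mul (g h : SL2Z) (i j : Fin 2) :
    (g * h) i j = g i 0 * h 0 j + g i 1 * h 1 j := by
  simp [Matrix.SpecialLinearGroup.coe_mul, Matrix.mul_apply, Fin.sum_univ_two]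

lemma mobius_comp (a b c d N D : ℝ) (hD : D ≠ 0) :
    (a * (N / D) + b) / (c * (N / D) + d) = (a * N + b * D) / (c * N + d * D) := by
  have h1 : a * (N / D) + b = (a * N + b * D) / D := by field_simp
  have h2 : c * (N / D) + d = (c * N + d * D) / D := by field_simp
  rcases eq_or_ne (c * N + d * D) 0 with h | h
  · rw [h1, h2, h, div_zero, zero_div, div_zero]
  · rw [h1, h2]
    field_simp

lemma act_mul {x : ℝ} (hx : Irrational x) (g h : SL2Z) :
    act (g * h) x = act g (act h x) := by
  have hdh := denom_ne_zero hx h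
  rw [act, act, act, mobius_comp _ _ _ _ _ _ hdh, coe_entries_mul, coe_entries_mul,
    coe_entries_mul, coe_entries_mul]
  push_cast
  congr 1 <;> ring



/-- The set of irrational real numbers, as the ping-pong board. -/
def Irr : Type := {x : ℝ // Irrational x}

noncomputable instance : MulAction SL2Z Irr where
  smul g x := ⟨act g x.1, act_irrational x.2 g⟩
  one_smul x := Subtype.ext (act_one x.1)
  mul_smul g h x := Subtype.ext (act_mul x.2 g h)

lemma smul_coe (g : SL2Z) (x : Irr) : (g • x).1 = act g x.1 := rfl

lemma center_acts_trivially {g : SL2Z} (hg : g ∈ Subgroup.center SL2Z) (x : Irr) :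
    g • x = x := by
  obtain ⟨r, hr, hscalar⟩ := Matrix.SpecialLinearGroup.mem_center_iff.mp hg
  have hr' : r = 1 ∨ r = -1 := by
    have h2 : r ^ 2 = 1 := by simpa using hr
    exact sq_eq_one_iff.mp h2
  have hent : ∀ i j : Fin 2, (g i j : ℤ) = if i = j then r else 0 := by
    intro i j
    rw [← hscalar, Matrix.scalar_apply]
    by_cases hij : i = j <;> rw [Matrix.diagonal_apply] <;> simp [hij]
  apply Subtype.ext
  rw [smul_coe, act, hent 0 0, hent 0 1, hent 1 0, hent 1 1]
  have hrne : (r : ℝ) ≠ 0 := by rcases hr' with h | h <;> simp [h]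
  simp
  field_simp


noncomputable def psl_perm : PSL2Z →* Equiv.Perm Irr :=
  QuotientGroup.lift (Subgroup.center SL2Z) (MulAction.toPermHom SL2Z Irr)
    (fun g hg => by
      ext x
      exact center_acts_trivially hg x)

noncomputable instance : MulAction PSL2Z Irr := MulAction.compHom _ psl_perm

lemma psl_smul (g : SL2Z) (x : Irr) :
    (QuotientGroup.mk g : PSL2Z) • x = g • x := rfl



noncomputable abbrev mkQ : SL2Z →* PSL2Z := QuotientGroup.mk' (Subgroup.center SL2Z)

lemma neg_one_mem_center : (-1 : SL2Z) ∈ Subgroup.center SL2Z := by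
  apply Matrix.SpecialLinearGroup.mem_center_iff.mpr
  exact ⟨-1, by norm_num, by ext i j; fin_cases i <;> fin_cases j <;>
    simp [Matrix.scalar_apply, Matrix.diagonal_apply]⟩

lemma Smat_sq : Smat ^ 2 = -1 := by
  apply Subtype.ext
  rw [sq]
  show (Smat : Matrix (Fin 2) (Fin 2) ℤ) * Smat = _
  rw [Smat]
  simp [Matrix.mul_fin_two]
  ext i j
  fin_cases i <;> fin_cases j <;> simp

lemma Tmat_cube : Tmat ^ 3 = -1 := by
  apply Subtype.ext
  show ((Tmat ^ 3 : SL2Z) : Matrix (Fin 2) (Fin 2) ℤ) = _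
  rw [pow_succ, pow_succ, pow_one, Matrix.SpecialLinearGroup.coe_mul,
    Matrix.SpecialLinearGroup.coe_mul, Tmat]
  ext i j
  fin_cases i <;> fin_cases j <;> simp [Matrix.mul_fin_two]

lemma mk_neg_one : mkQ (-1) = 1 := by
  rw [QuotientGroup.mk'_apply, QuotientGroup.eq_one_iff]
  exact neg_one_mem_center

lemma mkS_sq : (mkQ Smat) ^ 2 = 1 := by rw [← map_pow, Smat_sq, mk_neg_one]

lemma mkT_cube : (mkQ Tmat) ^ 3 = 1 := by rw [← map_pow, Tmat_cube, mk_neg_one]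

/-- A monoid hom from `Multiplicative (ZMod n)` given an element with `g ^ n = 1`. -/
def zmodHom {G : Type*} [Group G] (n : ℕ) [NeZero n] (g : G) (h : g ^ n = 1) :
    Multiplicative (ZMod n) →* G where
  toFun x := g ^ (Multiplicative.toAdd x).val
  map_one' := by simp
  map_mul' x y := by
    show g ^ (Multiplicative.toAdd x + Multiplicative.toAdd y).val = _
    rw [ZMod.val_add, ← pow_eq_pow_mod _ h, pow_add]

lemma zmodHom_apply {G : Type*} [Group G] (n : ℕ) [NeZero n] (g : G) (h : g ^ n = 1)
    (x : ZMod n) : zmodHom n g h (Multiplicative.ofAdd x) = g ^ x.val := rfl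

noncomputable def fS : Multiplicative (ZMod 2) →* PSL2Z := zmodHom 2 (mkQ Smat) mkS_sq
noncomputable def fT : Multiplicative (ZMod 3) →* PSL2Z := zmodHom 3 (mkQ Tmat) mkT_cube

lemma fS_one : fS (Multiplicative.ofAdd (1 : ZMod 2)) = mkQ Smat := by
  rw [fS, zmodHom_apply, show (1 : ZMod 2).val = 1 from rfl, pow_one]

lemma fT_one : fT (Multiplicative.ofAdd (1 : ZMod 3)) = mkQ Tmat := by
  rw [fT, zmodHom_apply, show (1 : ZMod 3).val = 1 from rfl, pow_one]


noncomputable def Kgen : Subgroup PSL2Z := Subgroup.closure {mkQ Smat, mkQ Tmat}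

lemma S_mul_T' : Smat * ModularGroup.T = Tmat := by
  apply Subtype.ext
  rw [Matrix.SpecialLinearGroup.coe_mul, ModularGroup.coe_T]
  show (!![0, -1; 1, 0] : Matrix (Fin 2) (Fin 2) ℤ) * !![1, 1; 0, 1] = !![0, -1; 1, 1]
  rw [Matrix.mul_fin_two]
  norm_num

lemma mkS_mem : mkQ Smat ∈ Kgen := Subgroup.subset_closure (Or.inl rfl)
lemma mkT_mem : mkQ Tmat ∈ Kgen := Subgroup.subset_closure (Or.inr rfl)

lemma mkT'_mem : mkQ ModularGroup.T ∈ Kgen := by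
  have : ModularGroup.T = Smat⁻¹ * Tmat := by rw [← S_mul_T']; group
  rw [this, map_mul, map_inv]
  exact mul_mem (inv_mem mkS_mem) mkT_mem

lemma generation : ∀ (n : ℕ) (M : SL2Z), (M 1 0).natAbs = n → mkQ M ∈ Kgen := by
  intro n
  induction n using Nat.strong_induction_on with
  | _ n ih =>
    intro M hn
    rcases Nat.eq_zero_or_pos n with h0 | hpos
    · -- bottom-left entry is zero
      subst h0
      have hc : M 1 0 = 0 := Int.natAbs_eq_zero.mp hn
      have hd := M.2
      rw [Matrix.det_fin_two] at hd
      rw [hc, mul_zero, sub_zero] at hd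
      rcases Int.eq_one_or_neg_one_of_mul_eq_one' hd with ⟨ha, hd'⟩ | ⟨ha, hd'⟩
      · have hM : M = ModularGroup.T ^ (M 0 1) := by
          apply Subtype.ext
          rw [ModularGroup.coe_T_zpow]
          ext i j
          fin_cases i <;> fin_cases j <;> simp [ha, hc, hd']
        rw [hM, map_zpow]
        exact zpow_mem mkT'_mem _
      · have hM : M = (-1) * ModularGroup.T ^ (-(M 0 1)) := by
          apply Subtype.ext
          rw [Matrix.SpecialLinearGroup.coe_mul, ModularGroup.coe_T_zpow,
            Matrix.SpecialLinearGroup.coe_neg, Matrix.SpecialLinearGroup.coe_one,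
            Matrix.neg_mul, Matrix.one_mul]
          ext i j
          fin_cases i <;> fin_cases j <;> simp [ha, hc, hd']
        rw [hM, map_mul, mk_neg_one, one_mul, map_zpow]
        exact zpow_mem mkT'_mem _
    · -- Euclidean step
      have hc : M 1 0 ≠ 0 := fun h => by simp [h] at hn; omega
      set a := M 0 0 with ha
      set c := M 1 0 with hcdef
      set q : ℤ := -(a / c) with hq
      set N : SL2Z := Smat * (ModularGroup.T ^ q * M) with hNdef
      have hN10 : N 1 0 = a + q * c := by
        rw [hNdef]
        show ((Smat * (ModularGroup.T ^ q * M) : SL2Z) : Matrix (Fin 2) (Fin 2) ℤ) 1 0 = _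
        rw [Matrix.SpecialLinearGroup.coe_mul, Matrix.SpecialLinearGroup.coe_mul,
          ModularGroup.coe_T_zpow]
        simp [Smat, Matrix.mul_apply, Matrix.vecMul, dotProduct,
          Fin.sum_univ_two, Matrix.vecHead, Matrix.vecTail]
        rfl
      have hmod : a + q * c = a % c := by
        rw [hq, Int.emod_def]
        ring
      have hlt : (N 1 0).natAbs < n := by
        rw [hN10, hmod, ← hn]
        calc (a % c).natAbs < |c|.natAbs :=
              Int.natAbs_lt_natAbs_of_nonneg_of_lt (Int.emod_nonneg a hc) (Int.emod_lt_abs a hc)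
          _ = c.natAbs := by rw [Int.natAbs_abs]
      have hNm := ih _ hlt N rfl
      have hM : M = (ModularGroup.T ^ q)⁻¹ * (Smat⁻¹ * N) := by rw [hNdef]; group
      rw [hM, map_mul, map_mul, map_inv, map_inv, map_zpow]
      exact mul_mem (inv_mem (zpow_mem mkT'_mem _)) (mul_mem (inv_mem mkS_mem) hNm)


lemma act_S (x : ℝ) : act Smat x = -1 / x := by
  rw [act, Smat]
  show ((((0:ℤ) : ℝ)) * x + ((-1 : ℤ) : ℝ)) / ((((1:ℤ) : ℝ)) * x + (((0:ℤ)) : ℝ)) = -1 / x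
  push_cast
  ring_nf

lemma act_T (x : ℝ) : act Tmat x = -1 / (x + 1) := by
  rw [act, Tmat]
  show ((((0:ℤ) : ℝ)) * x + ((-1 : ℤ) : ℝ)) / ((((1:ℤ) : ℝ)) * x + (((1:ℤ)) : ℝ)) = -1 / (x + 1)
  push_cast
  ring_nf


lemma psl_smul' (g : SL2Z) (x : Irr) : (mkQ g • x).1 = act g x.1 := rfl

def Hfam : Bool → Type := fun b => match b with
  | false => Multiplicative (ZMod 2)
  | true => Multiplicative (ZMod 3)

instance (b : Bool) : Group (Hfam b) := match b with
  | false => inferInstanceAs (Group (Multiplicative (ZMod 2)))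
  | true => inferInstanceAs (Group (Multiplicative (ZMod 3)))

noncomputable def ffam : ∀ b, Hfam b →* PSL2Z := fun b => match b with
  | false => fS
  | true => fT

def Xpp : Bool → Set Irr := fun b => match b with
  | false => {x | 0 < x.1}
  | true => {x | x.1 < 0}

lemma hXnonempty : ∀ b, (Xpp b).Nonempty := by
  intro b
  cases b
  · exact ⟨⟨Real.sqrt 2, irrational_sqrt_two⟩,
      show (0:ℝ) < Real.sqrt 2 by positivity⟩
  · exact ⟨⟨-Real.sqrt 2, irrational_sqrt_two.neg⟩,
      show -Real.sqrt 2 < (0:ℝ) by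
        have : (0:ℝ) < Real.sqrt 2 := by positivity
        linarith⟩

lemma hXdisj : Pairwise (Function.onFun Disjoint Xpp) := by
  intro i j hij
  cases i <;> cases j
  · exact absurd rfl hij
  · exact Set.disjoint_left.mpr fun x (hx : (0:ℝ) < x.1) (hx' : x.1 < 0) => by linarith
  · exact Set.disjoint_left.mpr fun x (hx : x.1 < (0:ℝ)) (hx' : 0 < x.1) => by linarith
  · exact absurd rfl hij

open Pointwise in
lemma hpp : Pairwise fun i j => ∀ h : Hfam i, h ≠ 1 → ffam i h • Xpp j ⊆ Xpp i := by
  intro i j hij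
  cases i
  · -- i = false : the image of S sends negatives to positives
    intro h hne
    have hdec : ∀ h' : Multiplicative (ZMod 2), h' ≠ 1 →
        h' = Multiplicative.ofAdd (1 : ZMod 2) := by decide
    have key : ffam false h = mkQ Smat := by
      rw [hdec h hne]; exact fS_one
    rw [key]
    cases j
    · exact absurd rfl hij
    · rintro _ ⟨y, hy, rfl⟩
      have hy' : y.1 < 0 := hy
      show (0 : ℝ) < (mkQ Smat • y).1
      rw [psl_smul', act_S]
      exact div_pos_iff.mpr (Or.inr ⟨by norm_num, hy'⟩)
  · -- i = true : T and T² send positives to negatives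
    intro h hne
    cases j
    swap
    · exact absurd rfl hij
    have hT1 : ∀ z : ℝ, 0 < z → -1 < act Tmat z ∧ act Tmat z < 0 := by
      intro z hz
      rw [act_T]
      constructor
      · rw [neg_div, neg_lt_neg_iff, div_lt_one (by linarith)]
        linarith
      · apply div_neg_of_neg_of_pos (by norm_num) (by linarith)
    have hT2 : ∀ z : ℝ, -1 < z → z < 0 → act Tmat z < 0 := by
      intro z h1 h2
      rw [act_T]
      apply div_neg_of_neg_of_pos (by norm_num) (by linarith)
    have hdec : ∀ h' : Multiplicative (ZMod 3), h' ≠ 1 →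
        h' = Multiplicative.ofAdd (1 : ZMod 3) ∨ h' = Multiplicative.ofAdd (2 : ZMod 3) := by
      decide
    have fT_two : fT (Multiplicative.ofAdd (2 : ZMod 3)) = (mkQ Tmat) ^ 2 := by
      rw [fT, zmodHom_apply, show ((2 : ZMod 3)).val = 2 from rfl]
    rcases hdec h hne with hh | hh
    · have key : ffam true h = mkQ Tmat := by rw [hh]; exact fT_one
      rw [key]
      rintro _ ⟨y, hy, rfl⟩
      have hy' : (0:ℝ) < y.1 := hy
      show (mkQ Tmat • y).1 < 0
      rw [psl_smul']
      exact (hT1 _ hy').2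
    · have key : ffam true h = (mkQ Tmat) ^ 2 := by rw [hh]; exact fT_two
      rw [key]
      rintro _ ⟨y, hy, rfl⟩
      have hy' : (0:ℝ) < y.1 := hy
      show ((mkQ Tmat) ^ 2 • y).1 < 0
      rw [sq, mul_smul, psl_smul', psl_smul']
      have h1 := hT1 _ hy'
      exact hT2 _ h1.1 h1.2

lemma hcard : (3 : Cardinal) ≤ Cardinal.mk Bool ∨ ∃ i, (3 : Cardinal) ≤ Cardinal.mk (Hfam i) := by
  right
  refine ⟨true, le_of_eq ?_⟩
  rw [show Hfam true = Multiplicative (ZMod 3) from rfl, Cardinal.mk_fintype]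
  norm_num

noncomputable def psi : Monoid.CoprodI Hfam →* PSL2Z := Monoid.CoprodI.lift ffam

lemma psi_injective : Function.Injective psi :=
  Monoid.CoprodI.lift_injective_of_ping_pong ffam hcard Xpp hXnonempty hXdisj hpp


noncomputable def phi : Monoid.Coprod (Multiplicative (ZMod 2)) (Multiplicative (ZMod 3)) →* PSL2Z :=
  Monoid.Coprod.lift fS fT

noncomputable def theta :
    Monoid.Coprod (Multiplicative (ZMod 2)) (Multiplicative (ZMod 3)) →* Monoid.CoprodI Hfam :=
  Monoid.Coprod.lift
    ((Monoid.CoprodI.of (M := Hfam) (i := false) :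
      Hfam false →* Monoid.CoprodI Hfam) : Multiplicative (ZMod 2) →* Monoid.CoprodI Hfam)
    ((Monoid.CoprodI.of (M := Hfam) (i := true) :
      Hfam true →* Monoid.CoprodI Hfam) : Multiplicative (ZMod 3) →* Monoid.CoprodI Hfam)

def pifam : ∀ b, Hfam b →* Monoid.Coprod (Multiplicative (ZMod 2)) (Multiplicative (ZMod 3)) :=
  fun b => match b with
  | false => Monoid.Coprod.inl
  | true => Monoid.Coprod.inr

lemma theta_leftinv :
    Function.LeftInverse (Monoid.CoprodI.lift pifam) theta := by
  have h : (Monoid.CoprodI.lift pifam).comp theta = MonoidHom.id _ := by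
    apply Monoid.Coprod.hom_ext
    · refine MonoidHom.ext fun x => ?_
      show (Monoid.CoprodI.lift pifam) (theta (Monoid.Coprod.inl x)) = Monoid.Coprod.inl x
      exact (congrArg (Monoid.CoprodI.lift pifam) (Monoid.Coprod.lift_apply_inl _ _ x)).trans
        (Monoid.CoprodI.lift_of pifam (i := false) x)
    · refine MonoidHom.ext fun x => ?_
      show (Monoid.CoprodI.lift pifam) (theta (Monoid.Coprod.inr x)) = Monoid.Coprod.inr x
      exact (congrArg (Monoid.CoprodI.lift pifam) (Monoid.Coprod.lift_apply_inr _ _ x)).trans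
        (Monoid.CoprodI.lift_of pifam (i := true) x)
  intro x
  calc (Monoid.CoprodI.lift pifam) (theta x)
      = ((Monoid.CoprodI.lift pifam).comp theta) x := rfl
    _ = x := by rw [h]; rfl

lemma theta_injective : Function.Injective theta := theta_leftinv.injective

lemma phi_eq : phi = psi.comp theta := by
  apply Monoid.Coprod.hom_ext
  · ext x
    simp [phi, psi, theta, Monoid.CoprodI.lift_of]
    rfl
  · ext x
    simp [phi, psi, theta, Monoid.CoprodI.lift_of]
    rfl

lemma phi_injective : Function.Injective phi := by
  rw [phi_eq]
  rw [MonoidHom.coe_comp]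
  exact psi_injective.comp theta_injective

lemma phi_inl : phi (Monoid.Coprod.inl (Multiplicative.ofAdd (1 : ZMod 2))) = mkQ Smat := by
  rw [phi, Monoid.Coprod.lift_apply_inl, fS_one]

lemma phi_inr : phi (Monoid.Coprod.inr (Multiplicative.ofAdd (1 : ZMod 3))) = mkQ Tmat := by
  rw [phi, Monoid.Coprod.lift_apply_inr, fT_one]

lemma phi_surjective : Function.Surjective phi := by
  intro y
  obtain ⟨M, rfl⟩ := QuotientGroup.mk'_surjective (Subgroup.center SL2Z) y
  have hmem := generation (M 1 0).natAbs M rfl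
  have hle : Kgen ≤ phi.range := by
    rw [Kgen]
    apply (Subgroup.closure_le _).mpr
    rintro x (rfl | rfl)
    · exact ⟨Monoid.Coprod.inl (Multiplicative.ofAdd (1 : ZMod 2)), phi_inl⟩
    · exact ⟨Monoid.Coprod.inr (Multiplicative.ofAdd (1 : ZMod 3)), phi_inr⟩
  exact hle hmem

noncomputable def e : Monoid.Coprod (Multiplicative (ZMod 2)) (Multiplicative (ZMod 3)) ≃* PSL2Z :=
  MulEquiv.ofBijective phi ⟨phi_injective, phi_surjective⟩

end PPA

/-- the assignment sending the generator `a` of `ℤ/2` to the Möbius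
transformation `z ↦ -1/z` (i.e. the class of `S` in `PSL(2,ℤ)`) and the generator
`b` of `ℤ/3` to `z ↦ -1/(z+1)` (the class of `T`) extends to a group isomorphism
from the free product `ℤ/2 * ℤ/3` onto `PSL(2,ℤ)`. -/
theorem free_product_iso_PSL2Z :
    ∃ e : Monoid.Coprod (Multiplicative (ZMod 2)) (Multiplicative (ZMod 3)) ≃* PSL2Z,
      e (Monoid.Coprod.inl (Multiplicative.ofAdd (1 : ZMod 2))) =
        QuotientGroup.mk Smat ∧
      e (Monoid.Coprod.inr (Multiplicative.ofAdd (1 : ZMod 3))) =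
        QuotientGroup.mk Tmat := by
  refine ⟨PPA.e, ?_, ?_⟩
  · rw [show PPA.e (Monoid.Coprod.inl (Multiplicative.ofAdd (1 : ZMod 2))) =
        PPA.phi (Monoid.Coprod.inl (Multiplicative.ofAdd (1 : ZMod 2))) from rfl,
      PPA.phi_inl]
    rfl
  · rw [show PPA.e (Monoid.Coprod.inr (Multiplicative.ofAdd (1 : ZMod 3))) =
        PPA.phi (Monoid.Coprod.inr (Multiplicative.ofAdd (1 : ZMod 3))) from rfl,
      PPA.phi_inr]
    rfl
end

section
/- With weights 𝔞,𝔟,𝔟̄,𝔟′,𝔟̄′ ≥ 0 summing to 1 and the master system as above restricted to y + ȳ = 1, a value y ∈ (0,1) extends to a solution (x, y, 1−y) of the full system if and only if y satisfies the consistency equation [y − 𝔟̄(1−y) − 𝔟′]·[𝔞(1−y) + 𝔟′y + 𝔟̄] = [𝔞y + 𝔟̄′(1−y) + 𝔟]·[(1−y) − 𝔟y − 𝔟̄′], in which case x = (1 − 𝔟y − 𝔟̄(1−y) − 𝔟′ − 𝔟̄′)/(1 − 𝔟′(1−y) − 𝔟̄′y). -/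
/-- The master system with `ȳ = 1 - y` substituted. -/
def MasterSystem (af bf bbf bf' bbf' x y : ℝ) : Prop :=
  x = af + bf * (1 - y) + bbf * y + bf' * x * (1 - y) + bbf' * x * y ∧
  y = af * x * y + bf * x + bbf * (1 - y) + bf' + bbf' * x * (1 - y) ∧
  (1 - y) = af * x * (1 - y) + bf * y + bbf * x + bf' * x * y + bbf'

/-- with weights ≥ 0 summing to 1 and `y ∈ (0,1)`, the value `y` extends
to a solution `(x, y, 1-y)` of the full master system iff `y` satisfies the
consistency equation, in which case `x` is given by the explicit formula. -/
theorem master_system_consistency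
    (af bf bbf bf' bbf' y : ℝ)
    (haf : 0 ≤ af) (hbf : 0 ≤ bf) (hbbf : 0 ≤ bbf) (hbf' : 0 ≤ bf') (hbbf' : 0 ≤ bbf')
    (hsum : af + bf + bbf + bf' + bbf' = 1)
    (hy : 0 < y) (hy1 : y < 1) :
    ((∃ x : ℝ, MasterSystem af bf bbf bf' bbf' x y) ↔
      (y - bbf * (1 - y) - bf') * (af * (1 - y) + bf' * y + bbf) =
        (af * y + bbf' * (1 - y) + bf) * ((1 - y) - bf * y - bbf')) ∧
    (∀ x : ℝ, MasterSystem af bf bbf bf' bbf' x y →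
      x = (1 - bf * y - bbf * (1 - y) - bf' - bbf') / (1 - bf' * (1 - y) - bbf' * y)) := by
  have hy2 : (0:ℝ) < 1 - y := by linarith
  have hD : 0 < 1 - bf' * (1 - y) - bbf' * y := by
    nlinarith [mul_pos hy hy2, mul_nonneg hbf' (mul_nonneg hy.le hy.le),
      mul_nonneg hbbf' (mul_nonneg hy2.le hy2.le),
      mul_nonneg (show (0:ℝ) ≤ af + bf + bbf by linarith) (mul_nonneg hy.le hy2.le)]
  constructor
  · constructor
    · rintro ⟨x, h1, h2, h3⟩
      linear_combination (af * (1 - y) + bf' * y + bbf) * h2 -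
        (af * y + bbf' * (1 - y) + bf) * h3
    · intro hcons
      set A := y - bbf * (1 - y) - bf' with hA
      set C := af * y + bbf' * (1 - y) + bf with hC
      set E := (1 - y) - bf * y - bbf' with hE
      set B := af * (1 - y) + bf' * y + bbf with hB
      refine ⟨(1 - bf * y - bbf * (1 - y) - bf' - bbf') / (1 - bf' * (1 - y) - bbf' * y),
        ?_, ?_, ?_⟩
      all_goals
        set x := (1 - bf * y - bbf * (1 - y) - bf' - bbf') / (1 - bf' * (1 - y) - bbf' * y)
          with hxdef
      all_goals
        have hx : x * (1 - bf' * (1 - y) - bbf' * y) =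
            1 - bf * y - bbf * (1 - y) - bf' - bbf' := by
          rw [hxdef, div_mul_cancel₀ _ hD.ne']
      · linear_combination hx - hsum
      · have hG : (1 - bf' * (1 - y) - bbf' * y) *
            (y - (af * x * y + bf * x + bbf * (1 - y) + bf' + bbf' * x * (1 - y))) = 0 := by
          linear_combination hcons - A * hsum - C * hx
        rcases mul_eq_zero.1 hG with h | h
        · linarith
        · linarith
      · have hG : (1 - bf' * (1 - y) - bbf' * y) *
            ((1 - y) - (af * x * (1 - y) + bf * y + bbf * x + bf' * x * y + bbf')) = 0 := by
          linear_combination -hcons - E * hsum - B * hx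
        rcases mul_eq_zero.1 hG with h | h
        · linarith
        · linarith
  · rintro x ⟨h1, -, -⟩
    rw [eq_div_iff hD.ne']
    linear_combination h1 + hsum
end

section
/- For a nearest-neighbour step distribution (𝔟′ = 𝔟̄′ = 0), the unique solution y ∈ (0,1) of the consistency equation satisfies y = 1/2 if and only if 𝔟 = 𝔟̄; i.e., the harmonic measure is in the Minkowski class iff the step distribution is symmetric. -/
/-- for a nearest-neighbour step distribution with `α = μ(a) ∈ (0,1)`
and `δ = μ(b) - μ(b̄)`, `|δ| ≤ 1 - α`, a solution `y ∈ (0,1)` of the consistency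
equation (written as the quadratic in `z = 2y - 1`) satisfies `y = 1/2` if and only
if `δ = 0`, i.e. the harmonic measure is in the Minkowski class iff the step
distribution is symmetric. -/
theorem minkowski_iff_symmetric
    (α δ y : ℝ) (hα : 0 < α) (hα1 : α < 1) (hδ : |δ| ≤ 1 - α)
    (hy : 0 < y) (hy1 : y < 1)
    (heq : α * δ * (2 * y - 1) ^ 2 + (4 - (α + 1) ^ 2 + δ ^ 2) * (2 * y - 1)
            - α * δ = 0) :
    y = 1 / 2 ↔ δ = 0 := by
  constructor
  · intro h
    subst h
    have : α * δ = 0 := by nlinarith [heq]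
    rcases mul_eq_zero.mp this with h | h
    · linarith
    · exact h
  · intro h
    subst h
    have hcoef : 4 - (α + 1) ^ 2 > 0 := by nlinarith
    have heq' : (4 - (α + 1) ^ 2) * (2 * y - 1) = 0 := by linear_combination heq
    rcases mul_eq_zero.mp heq' with h | h
    · linarith
    · linarith
end
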